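/- With I, K, X as above and M_λ = inf{I(u) : u ∈ X, K(u) = λ}, the scaling identity M_λ = λ^{2/3} M_1 holds for all λ > 0, and consequently the strict subadditivity M_α + M_{λ−α} > M_λ holds for all α ∈ (0, λ), provided M_1 > 0. -/

import Mathlib

open MeasureTheory Filter Real Topology
open scoped Pointwise

/-- The Fourier transform of a real-valued function on `ℝ`. -/
noncomputable def FT (u : ℝ → ℝ) : ℝ → ℂ :=
  FourierTransform.fourier (fun x : ℝ => (u x : ℂ))

/-- The squared Sobolev norm of order `s`, defined on the Fourier side. -/
noncomputable def sobNormSq (s : ℝ) (u : ℝ → ℝ) : ℝ :=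
  ∫ ξ : ℝ, (1 + ξ ^ 2) ^ s * ‖FT u ξ‖ ^ 2

/-- The Sobolev norm of order `s`. -/
noncomputable def sobNorm (s : ℝ) (u : ℝ → ℝ) : ℝ := Real.sqrt (sobNormSq s u)

/-- Membership in the Sobolev space `H^s(ℝ)`. -/
def MemSob (s : ℝ) (u : ℝ → ℝ) : Prop :=
  MemLp u 2 volume ∧
  Integrable (fun ξ : ℝ => (1 + ξ ^ 2) ^ s * ‖FT u ξ‖ ^ 2)

/-- The squared `L²` norm of the antiderivative `∂ₓ⁻¹u`, computed on the Fourier side. -/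
noncomputable def antiNormSq (u : ℝ → ℝ) : ℝ := ∫ ξ : ℝ, ‖FT u ξ‖ ^ 2 / ξ ^ 2

/-- The space `X = {f ∈ H^{1/2}(ℝ) : ∂ₓ⁻¹ f ∈ L²(ℝ)}`. -/
def MemX (u : ℝ → ℝ) : Prop :=
  MemSob (1/2) u ∧ Integrable (fun ξ : ℝ => ‖FT u ξ‖ ^ 2 / ξ ^ 2)

/-- The functional `I(u,c,γ)`, expressed on the Fourier side via Plancherel. -/
noncomputable def Ifun (c γ : ℝ) (u : ℝ → ℝ) : ℝ :=
  ∫ ξ : ℝ, ((1/2) * |ξ| * ‖FT u ξ‖ ^ 2 + (c/2) * ‖FT u ξ‖ ^ 2 + (γ/2) * ‖FT u ξ‖ ^ 2 / ξ ^ 2)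

/-- The constraint functional `K(u) = (1/3)∫ u³`. -/
noncomputable def Kfun (u : ℝ → ℝ) : ℝ := (1/3) * ∫ x : ℝ, u x ^ 3

/-- The Benjamin–Ono soliton `Q_c`. -/
noncomputable def Q (c : ℝ) (x : ℝ) : ℝ := 4 * c / (1 + c ^ 2 * x ^ 2)

/-- The constrained minimum `M_λ`. -/
noncomputable def Mfun (c γ lam : ℝ) : ℝ :=
  sInf {r : ℝ | ∃ u : ℝ → ℝ, MemX u ∧ Kfun u = lam ∧ r = Ifun c γ u}

/-- Fourier transform of a scaled function. -/
lemma FT_const_mul (t : ℝ) (u : ℝ → ℝ) :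
    FT (fun x => t * u x) = fun ξ => (t:ℂ) • FT u ξ := by
  have h : (fun x => ((t * u x : ℝ) : ℂ)) = (t:ℂ) • (fun x => (u x : ℂ)) := by
    funext x; push_cast; simp [Pi.smul_apply, smul_eq_mul]
  unfold FT
  rw [h]
  funext ξ
  rw [show FourierTransform.fourier ((t:ℂ) • fun x => (u x:ℂ))
      = (t:ℂ) • FourierTransform.fourier (fun x => (u x:ℂ)) from
    VectorFourier.fourierIntegral_const_smul _ _ _ _ _]
  rfl

lemma normSq_FT_const_mul (t : ℝ) (u : ℝ → ℝ) (ξ : ℝ) :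
    ‖FT (fun x => t * u x) ξ‖ ^ 2 = t ^ 2 * ‖FT u ξ‖ ^ 2 := by
  rw [FT_const_mul]
  simp [norm_smul, Complex.norm_real, mul_pow, sq_abs]

lemma MemX_const_mul {u : ℝ → ℝ} (t : ℝ) (hu : MemX u) : MemX (fun x => t * u x) := by
  obtain ⟨⟨h1, h2⟩, h3⟩ := hu
  refine ⟨⟨h1.const_mul t, ?_⟩, ?_⟩
  · have : (fun ξ : ℝ => (1 + ξ ^ 2) ^ ((1:ℝ)/2) * ‖FT (fun x => t * u x) ξ‖ ^ 2)
        = fun ξ : ℝ => t ^ 2 * ((1 + ξ ^ 2) ^ ((1:ℝ)/2) * ‖FT u ξ‖ ^ 2) := by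
      funext ξ; rw [normSq_FT_const_mul]; ring
    rw [this]
    exact h2.const_mul _
  · have : (fun ξ : ℝ => ‖FT (fun x => t * u x) ξ‖ ^ 2 / ξ ^ 2)
        = fun ξ : ℝ => t ^ 2 * (‖FT u ξ‖ ^ 2 / ξ ^ 2) := by
      funext ξ; rw [normSq_FT_const_mul]; ring
    rw [this]
    exact h3.const_mul _

lemma Kfun_const_mul (t : ℝ) (u : ℝ → ℝ) :
    Kfun (fun x => t * u x) = t ^ 3 * Kfun u := by
  unfold Kfun
  have : (fun x : ℝ => (t * u x) ^ 3) = fun x : ℝ => t ^ 3 * u x ^ 3 := by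
    funext x; ring
  rw [this, integral_const_mul]; ring

lemma Ifun_const_mul (c γ t : ℝ) (u : ℝ → ℝ) :
    Ifun c γ (fun x => t * u x) = t ^ 2 * Ifun c γ u := by
  unfold Ifun
  have : (fun ξ : ℝ => ((1/2) * |ξ| * ‖FT (fun x => t * u x) ξ‖ ^ 2
        + (c/2) * ‖FT (fun x => t * u x) ξ‖ ^ 2
        + (γ/2) * ‖FT (fun x => t * u x) ξ‖ ^ 2 / ξ ^ 2))
      = fun ξ : ℝ => t ^ 2 * ((1/2) * |ξ| * ‖FT u ξ‖ ^ 2 + (c/2) * ‖FT u ξ‖ ^ 2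
        + (γ/2) * ‖FT u ξ‖ ^ 2 / ξ ^ 2) := by
    funext ξ; rw [normSq_FT_const_mul]; ring
  rw [this, integral_const_mul]

lemma M_scaling (c γ : ℝ) (lam : ℝ) (hlam : 0 < lam) :
    Mfun c γ lam = lam ^ ((2:ℝ)/3) * Mfun c γ 1 := by
  set t : ℝ := lam ^ ((1:ℝ)/3) with ht_def
  have ht : 0 < t := Real.rpow_pos_of_pos hlam _
  have ht3 : t ^ 3 = lam := by
    rw [ht_def, ← Real.rpow_natCast (lam ^ ((1:ℝ)/3)) 3, ← Real.rpow_mul hlam.le]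
    norm_num
  have ht2 : t ^ 2 = lam ^ ((2:ℝ)/3) := by
    rw [ht_def, ← Real.rpow_natCast (lam ^ ((1:ℝ)/3)) 2, ← Real.rpow_mul hlam.le]
    norm_num
  have hset : {r : ℝ | ∃ u : ℝ → ℝ, MemX u ∧ Kfun u = lam ∧ r = Ifun c γ u}
      = (t ^ 2) • {r : ℝ | ∃ u : ℝ → ℝ, MemX u ∧ Kfun u = 1 ∧ r = Ifun c γ u} := by
    ext r
    constructor
    · rintro ⟨u, hu, hK, rfl⟩
      refine Set.mem_smul_set.2 ⟨Ifun c γ (fun x => t⁻¹ * u x), ⟨fun x => t⁻¹ * u x,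
        MemX_const_mul _ hu, ?_, rfl⟩, ?_⟩
      · rw [Kfun_const_mul, hK, ← ht3]
        field_simp
      · rw [Ifun_const_mul, smul_eq_mul]
        field_simp
    · intro hr
      obtain ⟨y, ⟨v, hv, hK, rfl⟩, rfl⟩ := Set.mem_smul_set.1 hr
      refine ⟨fun x => t * v x, MemX_const_mul _ hv, ?_, ?_⟩
      · rw [Kfun_const_mul, hK, mul_one, ht3]
      · rw [Ifun_const_mul, smul_eq_mul]
  unfold Mfun
  rw [hset, Real.sInf_smul_of_nonneg (by positivity), smul_eq_mul, ht2]

lemma rpow_twothirds_strict_superadd {a b : ℝ} (ha : 0 < a) (hb : 0 < b) :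
    (a + b) ^ ((2:ℝ)/3) < a ^ ((2:ℝ)/3) + b ^ ((2:ℝ)/3) := by
  have hab : 0 < a + b := by linarith
  have key : ∀ x : ℝ, 0 < x → x < a + b →
      (a + b) ^ (-(1:ℝ)/3) * x < x ^ ((2:ℝ)/3) := by
    intro x hx hxab
    have h1 : (a + b) ^ (-(1:ℝ)/3) < x ^ (-(1:ℝ)/3) := by
      have := Real.rpow_lt_rpow_of_neg hx hxab (by norm_num : -(1:ℝ)/3 < 0)
      exact this
    calc (a + b) ^ (-(1:ℝ)/3) * x < x ^ (-(1:ℝ)/3) * x :=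
          mul_lt_mul_of_pos_right h1 hx
      _ = x ^ ((2:ℝ)/3) := by
          rw [show ((2:ℝ)/3) = -1/3 + 1 by norm_num, Real.rpow_add hx, Real.rpow_one]
  have h1 := key a ha (by linarith)
  have h2 := key b hb (by linarith)
  have h3 : (a + b) ^ (-(1:ℝ)/3) * a + (a + b) ^ (-(1:ℝ)/3) * b = (a + b) ^ ((2:ℝ)/3) := by
    rw [← mul_add, show ((2:ℝ)/3) = -1/3 + 1 by norm_num, Real.rpow_add hab, Real.rpow_one]
  linarith

/-- scaling identity `M_λ = λ^{2/3}M_1` and strict subadditivity. -/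
theorem M_scaling_and_strict_subadditivity (c γ : ℝ) (hc : 0 < c) (hγ : 0 < γ)
    (lam : ℝ) (hlam : 0 < lam) :
    Mfun c γ lam = lam ^ ((2:ℝ)/3) * Mfun c γ 1 ∧
    (0 < Mfun c γ 1 → ∀ α : ℝ, 0 < α → α < lam →
      Mfun c γ lam < Mfun c γ α + Mfun c γ (lam - α)) := by
  constructor
  · exact M_scaling c γ lam hlam
  · intro hM α hα hαlam
    have hlamα : 0 < lam - α := by linarith
    rw [M_scaling c γ lam hlam, M_scaling c γ α hα, M_scaling c γ (lam - α) hlamα]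
    have h := rpow_twothirds_strict_superadd hα hlamα
    rw [show α + (lam - α) = lam by ring] at h
    nlinarith [hM]
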